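/- Let δ₀ > 0 be such that 𝒜(P) = A − B R⁻¹ Bᵀ P is Hurwitz for every symmetric P with ‖P − P*‖_F ≤ δ₀. Then there exists c₃ > 0 (depending only on δ₀) such that for every c₂ > 0 there exists δ₁ > 0 with the following property: for every symmetric P with ‖P − P*‖_F < δ₀ and every symmetric ΔG ∈ ℝ^{(n+m)×(n+m)} with ‖ΔG‖_F < δ₁ (with lower-left block ΔG₂₁ ∈ ℝ^{m×n} and lower-right block ΔG₂₂ ∈ ℝ^{m×m}), the matrix R + ΔG₂₂ is invertible, the gain K⁺ = (R + ΔG₂₂)⁻¹(BᵀP + ΔG₂₁) makes A − BK⁺ Hurwitz, and the error ℰ = Y₁ − Y₂ satisfies ‖ℰ‖_F ≤ c₃‖ΔG‖_F < c₂, where Y₁ is the unique symmetric solution of (A − BK⁺)ᵀY₁ + Y₁(A − BK⁺) = −(Q + K⁺ᵀRK⁺) and Y₂ is the unique symmetric solution of 𝒜(P)ᵀY₂ + Y₂𝒜(P) = −(Q + P B R⁻¹ Bᵀ P). -/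

import Mathlib

open Matrix MeasureTheory Filter NormedSpace
open scoped Kronecker

noncomputable section

/-- A real square matrix is Hurwitz if every eigenvalue over `ℂ` has negative real part. -/
def IsHurwitz {n : Type*} [Fintype n] [DecidableEq n] (X : Matrix n n ℝ) : Prop :=
  ∀ μ ∈ spectrum ℂ (X.map (algebraMap ℝ ℂ)), μ.re < 0

/-- The Frobenius norm of a real matrix. -/
def frobNorm {p q : Type*} [Fintype p] [Fintype q] (X : Matrix p q ℝ) : ℝ :=
  Real.sqrt (∑ i, ∑ j, (X i j) ^ 2)

/-- The spectral (ℓ²-operator) norm of a real matrix. -/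
def spec2Norm {p q : Type*} [Fintype p] [Fintype q] [DecidableEq q] (X : Matrix p q ℝ) : ℝ :=
  ‖LinearMap.toContinuousLinearMap (Matrix.toEuclideanLin X)‖

attribute [local instance] Matrix.normedAddCommGroup Matrix.normedSpace

open Polynomial Metric

instance matNACG {m n : Type*} [Fintype m] [Fintype n] : NormedAddCommGroup (Matrix m n ℝ) :=
  { Matrix.normedAddCommGroup with
    toUniformSpace := Matrix.instUniformSpace m n ℝ
    uniformity_dist := (Matrix.normedAddCommGroup (m := m) (n := n) (α := ℝ)).uniformity_dist }

instance matNS {m n : Type*} [Fintype m] [Fintype n] : NormedSpace ℝ (Matrix m n ℝ) :=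
  { norm_smul_le := (Matrix.normedSpace (m := m) (n := n) (α := ℝ) (R := ℝ)).norm_smul_le }

section auxLemmas
variable {N : ℕ}

section frob
variable {p q : Type*} [Fintype p] [Fintype q]

lemma frobNorm_nonneg (X : Matrix p q ℝ) : 0 ≤ frobNorm X := Real.sqrt_nonneg _

lemma entry_le_frobNorm (X : Matrix p q ℝ) (i : p) (j : q) : |X i j| ≤ frobNorm X := by
  have h1 : (X i j) ^ 2 ≤ ∑ i, ∑ j, (X i j) ^ 2 := by
    calc (X i j) ^ 2 ≤ ∑ j', (X i j') ^ 2 :=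
          Finset.single_le_sum (f := fun j' => (X i j') ^ 2) (fun _ _ => sq_nonneg _) (Finset.mem_univ j)
      _ ≤ ∑ i', ∑ j', (X i' j') ^ 2 :=
          Finset.single_le_sum (f := fun i' => ∑ j', (X i' j') ^ 2)
            (fun _ _ => Finset.sum_nonneg fun _ _ => sq_nonneg _) (Finset.mem_univ i)
  calc |X i j| = Real.sqrt ((X i j) ^ 2) := (Real.sqrt_sq_eq_abs _).symm
    _ ≤ frobNorm X := Real.sqrt_le_sqrt h1

lemma norm_le_frobNorm (X : Matrix p q ℝ) : ‖X‖ ≤ frobNorm X := by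
  rw [Matrix.norm_le_iff (frobNorm_nonneg X)]
  intro i j
  simpa using entry_le_frobNorm X i j

lemma frobNorm_le_card_mul_norm (X : Matrix p q ℝ) :
    frobNorm X ≤ (Fintype.card p : ℝ) * (Fintype.card q) * ‖X‖ := by
  have h0 : (0:ℝ) ≤ ‖X‖ := norm_nonneg _
  have h1 : ∑ i, ∑ j, (X i j) ^ 2 ≤ (Fintype.card p : ℝ) * (Fintype.card q) * ‖X‖ ^ 2 := by
    calc ∑ i, ∑ j, (X i j) ^ 2 ≤ ∑ _i : p, ∑ _j : q, ‖X‖ ^ 2 := by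
          refine Finset.sum_le_sum fun i _ => Finset.sum_le_sum fun j _ => ?_
          have := Matrix.norm_entry_le_entrywise_sup_norm X (i := i) (j := j)
          have h2 : |X i j| ≤ ‖X‖ := by simpa using this
          calc (X i j) ^ 2 = |X i j| ^ 2 := (sq_abs _).symm
            _ ≤ ‖X‖ ^ 2 := pow_le_pow_left₀ (abs_nonneg _) h2 2
      _ = (Fintype.card p : ℝ) * (Fintype.card q) * ‖X‖ ^ 2 := by
          simp [Finset.sum_const, mul_assoc]
  calc frobNorm X ≤ Real.sqrt ((Fintype.card p : ℝ) * (Fintype.card q) * ‖X‖ ^ 2) :=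
        Real.sqrt_le_sqrt h1
    _ ≤ Real.sqrt (((Fintype.card p : ℝ) * (Fintype.card q)) ^ 2 * ‖X‖ ^ 2) := by
        apply Real.sqrt_le_sqrt
        have hNN : (Fintype.card p : ℝ) * (Fintype.card q) ≤ ((Fintype.card p : ℝ) * (Fintype.card q)) ^ 2 := by
          have h := Nat.le_self_pow (two_ne_zero) (Fintype.card p * Fintype.card q)
          have := (Nat.cast_le (α := ℝ)).2 h
          push_cast at this
          calc (Fintype.card p : ℝ) * (Fintype.card q) ≤ ((Fintype.card p * Fintype.card q : ℕ) : ℝ) ^ 2 := by push_cast; linarith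
            _ = ((Fintype.card p : ℝ) * (Fintype.card q)) ^ 2 := by push_cast; ring
        nlinarith [sq_nonneg ‖X‖, hNN]
    _ = (Fintype.card p : ℝ) * (Fintype.card q) * ‖X‖ := by
        rw [← mul_pow, Real.sqrt_sq (by positivity)]

lemma frobNorm_continuous : Continuous (frobNorm (p := p) (q := q)) := by
  apply Real.continuous_sqrt.comp
  refine continuous_finset_sum _ fun i _ => continuous_finset_sum _ fun j _ => ?_
  exact ((continuous_apply j).comp (continuous_apply i)).pow 2

end frob

section mulnorm
variable {p q r s : Type*} [Fintype p] [Fintype q] [Fintype r] [Fintype s]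

lemma norm_mul_le_card (X : Matrix p q ℝ) (Y : Matrix q r ℝ) :
    ‖X * Y‖ ≤ (Fintype.card q : ℝ) * ‖X‖ * ‖Y‖ := by
  have h : (0:ℝ) ≤ (Fintype.card q : ℝ) * ‖X‖ * ‖Y‖ := by positivity
  rw [Matrix.norm_le_iff h]
  intro i j
  calc ‖(X * Y) i j‖ = ‖∑ k, X i k * Y k j‖ := by rw [Matrix.mul_apply]
    _ ≤ ∑ k, ‖X i k * Y k j‖ := norm_sum_le _ _
    _ ≤ ∑ _k : q, ‖X‖ * ‖Y‖ := by
        refine Finset.sum_le_sum fun k _ => ?_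
        rw [norm_mul]
        exact mul_le_mul (Matrix.norm_entry_le_entrywise_sup_norm X)
          (Matrix.norm_entry_le_entrywise_sup_norm Y) (norm_nonneg _) (norm_nonneg _)
    _ = (Fintype.card q : ℝ) * ‖X‖ * ‖Y‖ := by simp [Finset.sum_const, mul_assoc]

lemma norm_toBlocks₂₁_le (X : Matrix (p ⊕ q) (r ⊕ s) ℝ) : ‖X.toBlocks₂₁‖ ≤ ‖X‖ := by
  rw [Matrix.norm_le_iff (norm_nonneg X)]
  intro i j
  exact Matrix.norm_entry_le_entrywise_sup_norm X (i := Sum.inr i) (j := Sum.inl j)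

lemma norm_toBlocks₂₂_le (X : Matrix (p ⊕ q) (r ⊕ s) ℝ) : ‖X.toBlocks₂₂‖ ≤ ‖X‖ := by
  rw [Matrix.norm_le_iff (norm_nonneg X)]
  intro i j
  exact Matrix.norm_entry_le_entrywise_sup_norm X (i := Sum.inr i) (j := Sum.inr j)

end mulnorm

section spec
variable {N : ℕ}

lemma my_eval_charpoly (M : Matrix (Fin N) (Fin N) ℂ) (μ : ℂ) :
    (M.charpoly).eval μ = (μ • (1 : Matrix (Fin N) (Fin N) ℂ) - M).det := by
  rw [Matrix.charpoly, ← Polynomial.coe_evalRingHom, RingHom.map_det]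
  congr 1
  ext i j
  by_cases h : i = j <;>
    simp [h, Matrix.charmatrix_apply, Matrix.one_apply, Matrix.sub_apply, Matrix.smul_apply,
      Matrix.diagonal_apply]

lemma mem_spectrum_iff_det (M : Matrix (Fin N) (Fin N) ℂ) (z : ℂ) :
    z ∈ spectrum ℂ M ↔ (z • (1 : Matrix (Fin N) (Fin N) ℂ) - M).det = 0 := by
  rw [spectrum.mem_iff, Algebra.algebraMap_eq_smul_one, Matrix.isUnit_iff_isUnit_det,
    isUnit_iff_ne_zero, not_not]

lemma spectrum_norm_bound (M : Matrix (Fin N) (Fin N) ℂ) (C : ℝ)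
    (hC : ∀ i j, ‖M i j‖ ≤ C) {z : ℂ} (hz : z ∈ spectrum ℂ M) : ‖z‖ ≤ N * C := by
  rw [mem_spectrum_iff_det] at hz
  obtain ⟨v, hv0, hv⟩ := (Matrix.exists_mulVec_eq_zero_iff).2 hz
  obtain ⟨i, -, hi⟩ := Finset.exists_max_image Finset.univ (fun i => ‖v i‖)
    ⟨(⟨0, by
      rcases Nat.eq_zero_or_pos N with h | h
      · exfalso; apply hv0; ext k; exact absurd k.2 (by omega)
      · exact h⟩ : Fin N), Finset.mem_univ _⟩
  have hvi : 0 < ‖v i‖ := by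
    by_contra h
    push_neg at h
    apply hv0
    ext k
    have := hi k (Finset.mem_univ k)
    have : ‖v k‖ ≤ 0 := le_trans this h
    simpa using le_antisymm this (norm_nonneg _)
  have hrow : z * v i = ∑ j, M i j * v j := by
    have h := congrFun hv i
    have hexp : ∑ j, (z • (1 : Matrix (Fin N) (Fin N) ℂ) - M) i j * v j = 0 := by
      simpa [Matrix.mulVec, dotProduct] using h
    have heq : ∑ j, (z • (1 : Matrix (Fin N) (Fin N) ℂ) - M) i j * v j
        = z * v i - ∑ j, M i j * v j := by
      simp only [Matrix.sub_apply, Matrix.smul_apply, smul_eq_mul, sub_mul,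
        Finset.sum_sub_distrib]
      congr 1
      rw [Finset.sum_eq_single i]
      · simp
      · intro b _ hb
        simp [Matrix.one_apply_ne (Ne.symm hb)]
      · intro h; exact absurd (Finset.mem_univ i) h
    rw [heq] at hexp
    linear_combination hexp
  have : ‖z‖ * ‖v i‖ ≤ (N * C) * ‖v i‖ := by
    calc ‖z‖ * ‖v i‖ = ‖z * v i‖ := (norm_mul _ _).symm
      _ = ‖∑ j, M i j * v j‖ := by rw [hrow]
      _ ≤ ∑ j, ‖M i j * v j‖ := norm_sum_le _ _
      _ ≤ ∑ _j : Fin N, C * ‖v i‖ := by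
          refine Finset.sum_le_sum fun j _ => ?_
          rw [norm_mul]
          exact mul_le_mul (hC i j) (hi j (Finset.mem_univ j)) (norm_nonneg _)
            (le_trans (norm_nonneg _) (hC i j))
      _ = (N * C) * ‖v i‖ := by simp [Finset.sum_const]; ring
  exact le_of_mul_le_mul_right this hvi

end spec

lemma lyap_inj_complex (M : Matrix (Fin N) (Fin N) ℂ)
    (hσ : ∀ μ ∈ spectrum ℂ M, μ.re < 0)
    (W : Matrix (Fin N) (Fin N) ℂ) (hW : Mᴴ * W + W * M = 0) : W = 0 := by
  have h1 : W * M = (-Mᴴ) * W := by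
    have h : W * M = -(Mᴴ * W) := eq_neg_of_add_eq_zero_right hW
    rw [h, neg_mul]
  -- powers
  have hpow : ∀ k : ℕ, W * M ^ k = (-Mᴴ) ^ k * W := by
    intro k
    induction k with
    | zero => simp
    | succ k ih =>
      rw [pow_succ, pow_succ, ← mul_assoc, ih, mul_assoc, h1, ← mul_assoc]
  -- polynomials
  have hq : ∀ q : ℂ[X], W * aeval M q = aeval (-Mᴴ) q * W := by
    intro q
    induction q using Polynomial.induction_on' with
    | add p r hp hr => rw [map_add, map_add, mul_add, add_mul, hp, hr]
    | monomial k a =>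
      rw [Polynomial.aeval_monomial, Polynomial.aeval_monomial]
      calc W * (algebraMap ℂ (Matrix (Fin N) (Fin N) ℂ) a * M ^ k)
          = algebraMap ℂ (Matrix (Fin N) (Fin N) ℂ) a * (W * M ^ k) := by
            rw [← mul_assoc, ← Algebra.commutes a W, mul_assoc]
        _ = algebraMap ℂ (Matrix (Fin N) (Fin N) ℂ) a * ((-Mᴴ) ^ k * W) := by rw [hpow]
        _ = algebraMap ℂ (Matrix (Fin N) (Fin N) ℂ) a * (-Mᴴ) ^ k * W := by rw [mul_assoc]
  have h0 : aeval (-Mᴴ) M.charpoly * W = 0 := by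
    rw [← hq, Matrix.aeval_self_charpoly, mul_zero]
  -- each root has negative real part, and units
  have hroot : ∀ lam ∈ M.charpoly.roots, lam.re < 0 := by
    intro lam hlam
    apply hσ
    rw [mem_spectrum_iff_det, ← my_eval_charpoly]
    exact (Polynomial.isRoot_of_mem_roots hlam)
  have hfac : ∀ lam ∈ M.charpoly.roots, IsUnit (aeval (-Mᴴ) (X - C lam)) := by
    intro lam hlam
    have hlre : lam.re < 0 := hroot lam hlam
    have : aeval (-Mᴴ) (X - C lam) = -(Mᴴ + lam • 1) := by
      rw [map_sub, Polynomial.aeval_X, Polynomial.aeval_C, Algebra.algebraMap_eq_smul_one]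
      noncomm_ring
    rw [this]
    refine IsUnit.neg ?_
    rw [Matrix.isUnit_iff_isUnit_det, isUnit_iff_ne_zero]
    intro hdet
    have hconj : Mᴴ + lam • (1 : Matrix (Fin N) (Fin N) ℂ)
        = (M + (starRingEnd ℂ lam) • 1)ᴴ := by
      rw [conjTranspose_add, conjTranspose_smul]
      simp
    rw [hconj, Matrix.det_conjTranspose] at hdet
    have hdet2 : (M + (starRingEnd ℂ lam) • (1 : Matrix (Fin N) (Fin N) ℂ)).det = 0 := by
      have := congrArg star hdet
      simpa using this
    have hmem : (-(starRingEnd ℂ lam)) ∈ spectrum ℂ M := by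
      rw [mem_spectrum_iff_det]
      have : (-(starRingEnd ℂ lam)) • (1 : Matrix (Fin N) (Fin N) ℂ) - M
          = -(M + (starRingEnd ℂ lam) • 1) := by
        rw [neg_smul]; noncomm_ring
      rw [this, Matrix.det_neg, hdet2, mul_zero]
    have := hσ _ hmem
    simp [Complex.neg_re, Complex.conj_re] at this
    linarith
  -- charpoly as product of linear factors
  have hsplit : M.charpoly = (M.charpoly.roots.map fun a => X - C a).prod :=
    (IsAlgClosed.splits _).eq_prod_roots_of_monic M.charpoly_monic
  have key : ∀ s : Multiset ℂ, (∀ lam ∈ s, IsUnit (aeval (-Mᴴ) (X - C lam))) →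
      IsUnit (aeval (-Mᴴ) (s.map fun a => X - C a).prod) := by
    intro s
    induction s using Multiset.induction with
    | empty => intro _; simp
    | cons a s ih =>
      intro h
      rw [Multiset.map_cons, Multiset.prod_cons, _root_.map_mul]
      exact (h a (Multiset.mem_cons_self a s)).mul
        (ih fun lam hl => h lam (Multiset.mem_cons_of_mem hl))
  have hunit : IsUnit (aeval (-Mᴴ) M.charpoly) := by
    rw [hsplit]; exact key _ hfac
  obtain ⟨u, hu⟩ := hunit
  calc W = 1 * W := (one_mul W).symm
    _ = (↑u⁻¹ * aeval (-Mᴴ) M.charpoly) * W := by rw [← hu, Units.inv_mul]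
    _ = ↑u⁻¹ * (aeval (-Mᴴ) M.charpoly * W) := by rw [mul_assoc]
    _ = 0 := by rw [h0, mul_zero]

lemma lyap_inj_real (X : Matrix (Fin N) (Fin N) ℝ) (hX : IsHurwitz X)
    (Y : Matrix (Fin N) (Fin N) ℝ) (hY : Xᵀ * Y + Y * X = 0) : Y = 0 := by
  set f : ℝ →+* ℂ := (algebraMap ℝ ℂ)
  have hH : (X.map f)ᴴ = Xᵀ.map f := by
    ext i j
    simp [Matrix.conjTranspose_apply, Matrix.map_apply, f, Complex.conj_ofReal]
  have heq : (X.map f)ᴴ * (Y.map f) + (Y.map f) * (X.map f) = 0 := by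
    rw [hH, ← Matrix.map_mul (f := f), ← Matrix.map_mul (f := f), ← Matrix.map_add _ (map_add f), hY]
    ext i j; simp
  have := lyap_inj_complex (X.map f) hX (Y.map f) heq
  ext i j
  have h2 := congrFun (congrFun this i) j
  simp only [Matrix.map_apply, Matrix.zero_apply] at h2
  simp only [Matrix.zero_apply]
  exact Complex.ofReal_eq_zero.mp h2

/-- The Lyapunov operator as a linear map. -/
def lyapLM (X : Matrix (Fin N) (Fin N) ℝ) :
    Matrix (Fin N) (Fin N) ℝ →ₗ[ℝ] Matrix (Fin N) (Fin N) ℝ where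
  toFun Y := Xᵀ * Y + Y * X
  map_add' Y Z := by rw [Matrix.mul_add, Matrix.add_mul]; abel
  map_smul' c Y := by
    simp only [RingHom.id_apply, Matrix.smul_mul, Matrix.mul_smul, smul_add]

def lyapCLM (X : Matrix (Fin N) (Fin N) ℝ) :
    Matrix (Fin N) (Fin N) ℝ →L[ℝ] Matrix (Fin N) (Fin N) ℝ :=
  LinearMap.toContinuousLinearMap (lyapLM X)

lemma lyapCLM_apply (X Y : Matrix (Fin N) (Fin N) ℝ) :
    lyapCLM X Y = Xᵀ * Y + Y * X := rfl

/-- `lyapCLM` as a linear map in `X`, to get continuity. -/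
def lyapBig : Matrix (Fin N) (Fin N) ℝ →ₗ[ℝ]
    (Matrix (Fin N) (Fin N) ℝ →L[ℝ] Matrix (Fin N) (Fin N) ℝ) where
  toFun := lyapCLM
  map_add' X Z := by
    refine ContinuousLinearMap.ext fun Y => ?_
    show (X + Z)ᵀ * Y + Y * (X + Z) = (Xᵀ * Y + Y * X) + (Zᵀ * Y + Y * Z)
    rw [Matrix.transpose_add, Matrix.add_mul, Matrix.mul_add]
    abel
  map_smul' c X := by
    refine ContinuousLinearMap.ext fun Y => ?_
    show (c • X)ᵀ * Y + Y * (c • X) = c • (Xᵀ * Y + Y * X)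
    rw [Matrix.transpose_smul, Matrix.smul_mul, Matrix.mul_smul, smul_add]

lemma lyapCLM_continuous : Continuous (lyapCLM (N := N)) :=
  (lyapBig (N := N)).continuous_of_finiteDimensional

lemma lyapCLM_isUnit (X : Matrix (Fin N) (Fin N) ℝ) (hX : IsHurwitz X) :
    IsUnit (lyapCLM X) := by
  have hinj : Function.Injective (lyapLM X) := by
    rw [← LinearMap.ker_eq_bot, LinearMap.ker_eq_bot']
    intro Y hY
    exact lyap_inj_real X hX Y hY
  have hbij : Function.Bijective (lyapLM X) :=
    ⟨hinj, (LinearMap.injective_iff_surjective).1 hinj⟩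
  let e := LinearEquiv.ofBijective (lyapLM X) hbij
  let ec : Matrix (Fin N) (Fin N) ℝ ≃L[ℝ] Matrix (Fin N) (Fin N) ℝ :=
    LinearEquiv.toContinuousLinearEquiv e
  refine ⟨⟨lyapCLM X, ec.symm.toContinuousLinearMap, ?_, ?_⟩, rfl⟩
  · refine ContinuousLinearMap.ext fun Y => ?_
    show lyapCLM X (ec.symm.toContinuousLinearMap Y) = Y
    have h4 : ec.symm.toContinuousLinearMap Y = e.symm Y := rfl
    have h5 : lyapCLM X (e.symm Y) = e (e.symm Y) := rfl
    rw [h4, h5, e.apply_symm_apply]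
  · refine ContinuousLinearMap.ext fun Y => ?_
    show ec.symm.toContinuousLinearMap (lyapCLM X Y) = Y
    have h4 : lyapCLM X Y = e Y := rfl
    have h5 : ec.symm.toContinuousLinearMap (e Y) = e.symm (e Y) := rfl
    rw [h4, h5, e.symm_apply_apply]

lemma isOpen_isHurwitz : IsOpen {X : Matrix (Fin N) (Fin N) ℝ | IsHurwitz X} := by
  rw [Metric.isOpen_iff]
  intro X₀ hX₀
  set b : ℝ := (N : ℝ) * (‖X₀‖ + 1) with hb
  -- the compact set of "bad" candidate eigenvalues
  set K : Set ℂ := Metric.closedBall 0 b ∩ {z : ℂ | 0 ≤ z.re} with hK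
  have hKcomp : IsCompact K :=
    (isCompact_closedBall 0 b).inter_right (isClosed_le continuous_const Complex.continuous_re)
  -- the determinant function
  set f : Matrix (Fin N) (Fin N) ℝ × ℂ → ℂ :=
    fun p => (p.2 • (1 : Matrix (Fin N) (Fin N) ℂ) - (p.1.map (algebraMap ℝ ℂ))).det with hf
  have hfc : Continuous f := by
    apply Continuous.matrix_det
    apply Continuous.sub
    · exact continuous_snd.smul continuous_const
    · exact (continuous_fst.matrix_map Complex.continuous_ofReal)
  set U : Set (Matrix (Fin N) (Fin N) ℝ × ℂ) := {p | f p ≠ 0} with hU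
  have hUopen : IsOpen U := isOpen_ne_fun hfc continuous_const
  have hsub : {X₀} ×ˢ K ⊆ U := by
    rintro ⟨X, z⟩ ⟨hX, hz⟩
    simp only [Set.mem_singleton_iff] at hX
    intro h0
    rw [hX] at h0
    have hmemz : z ∈ spectrum ℂ (X₀.map (algebraMap ℝ ℂ)) := (mem_spectrum_iff_det _ _).2 h0
    have hlt := hX₀ z hmemz
    have hge : (0:ℝ) ≤ z.re := hz.2
    linarith
  obtain ⟨v, w, hvopen, hwopen, hv, hw, hvw⟩ :=
    generalized_tube_lemma isCompact_singleton hKcomp hUopen hsub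
  obtain ⟨ε, hεpos, hε⟩ := Metric.isOpen_iff.1 hvopen X₀ (hv rfl)
  refine ⟨min ε 1, by positivity, ?_⟩
  intro X hX
  simp only [Metric.mem_ball] at hX
  intro z hz
  by_contra hre
  push_neg at hre
  -- z is in K
  have hXnorm : ‖X‖ ≤ ‖X₀‖ + 1 := by
    have := norm_sub_norm_le X X₀
    have h2 : dist X X₀ = ‖X - X₀‖ := dist_eq_norm _ _
    have : ‖X - X₀‖ < 1 := by rw [← h2]; exact lt_of_lt_of_le hX (min_le_right _ _)
    linarith [norm_sub_norm_le X X₀, (dist_eq_norm X X₀) ▸ lt_of_lt_of_le hX (min_le_right ε 1)]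
  have hzK : z ∈ K := by
    constructor
    · rw [Metric.mem_closedBall, dist_zero_right]
      refine le_trans (spectrum_norm_bound _ (‖X₀‖ + 1) ?_ hz) (le_refl _)
      intro i j
      calc ‖(X.map (algebraMap ℝ ℂ)) i j‖ = |X i j| := by
            simp [Matrix.map_apply, Complex.norm_real]
        _ ≤ ‖X‖ := by simpa using Matrix.norm_entry_le_entrywise_sup_norm X (i := i) (j := j)
        _ ≤ ‖X₀‖ + 1 := hXnorm
    · exact hre
  have hmem : (X, z) ∈ U := hvw ⟨hε (by
      rw [Metric.mem_ball]
      exact lt_of_lt_of_le hX (min_le_left _ _)), hw hzK⟩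
  exact hmem ((mem_spectrum_iff_det _ _).1 hz)

lemma inv_stable (R : Matrix (Fin m) (Fin m) ℝ) (hR : IsUnit R.det) :
    ∃ δa > 0, ∀ Δ : Matrix (Fin m) (Fin m) ℝ, ‖Δ‖ ≤ δa →
      IsUnit (R + Δ).det ∧ ‖(R + Δ)⁻¹‖ ≤ ‖R⁻¹‖ + 1 := by
  have hdetc : Continuous fun Δ : Matrix (Fin m) (Fin m) ℝ => (R + Δ).det :=
    (continuous_const.add continuous_id).matrix_det
  have hdet0 : (R + (0 : Matrix (Fin m) (Fin m) ℝ)).det ≠ 0 := by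
    simpa using hR.ne_zero
  have hinvc : ContinuousAt (fun Δ : Matrix (Fin m) (Fin m) ℝ => ‖(R + Δ)⁻¹‖) 0 := by
    have h1 : ∀ Δ : Matrix (Fin m) (Fin m) ℝ,
        (R + Δ)⁻¹ = ((R + Δ).det)⁻¹ • (R + Δ).adjugate := by
      intro Δ
      rw [Matrix.inv_def, Ring.inverse_eq_inv']
    have h2 : ContinuousAt (fun Δ : Matrix (Fin m) (Fin m) ℝ =>
        ((R + Δ).det)⁻¹ • (R + Δ).adjugate) 0 := by
      apply ContinuousAt.fun_smul
      · exact (hdetc.continuousAt).inv₀ hdet0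
      · exact ((continuous_const.add continuous_id).matrix_adjugate).continuousAt
    have := h2.norm
    simpa only [← h1] using this
  have hval : ‖(R + (0 : Matrix (Fin m) (Fin m) ℝ))⁻¹‖ < ‖R⁻¹‖ + 1 := by simp
  have hev1 : ∀ᶠ Δ in nhds (0 : Matrix (Fin m) (Fin m) ℝ), ‖(R + Δ)⁻¹‖ < ‖R⁻¹‖ + 1 :=
    hinvc.eventually_lt continuousAt_const hval
  have hev2 : ∀ᶠ Δ in nhds (0 : Matrix (Fin m) (Fin m) ℝ), (R + Δ).det ≠ 0 :=
    hdetc.continuousAt.eventually_ne hdet0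
  obtain ⟨ε, hεpos, hε⟩ := Metric.eventually_nhds_iff_ball.1 (hev1.and hev2)
  refine ⟨ε / 2, by positivity, fun Δ hΔ => ?_⟩
  have hmem : Δ ∈ Metric.ball (0 : Matrix (Fin m) (Fin m) ℝ) ε := by
    rw [Metric.mem_ball, dist_zero_right]
    linarith
  obtain ⟨hlt, hne⟩ := hε Δ hmem
  exact ⟨isUnit_iff_ne_zero.2 hne, le_of_lt hlt⟩

lemma resolvent_id (R Δ : Matrix (Fin m) (Fin m) ℝ) (hR : IsUnit R.det)
    (hRD : IsUnit (R + Δ).det) :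
    (R + Δ)⁻¹ - R⁻¹ = -((R + Δ)⁻¹ * Δ * R⁻¹) := by
  have h1 : (R + Δ)⁻¹ * (R + Δ) = 1 := Matrix.nonsing_inv_mul _ hRD
  have h2 : R * R⁻¹ = 1 := Matrix.mul_nonsing_inv _ hR
  have h3 : Δ = (R + Δ) - R := by abel
  have key : (R + Δ)⁻¹ * Δ * R⁻¹ = R⁻¹ - (R + Δ)⁻¹ := by
    calc (R + Δ)⁻¹ * Δ * R⁻¹ = (R + Δ)⁻¹ * ((R + Δ) - R) * R⁻¹ := by rw [← h3]
      _ = ((R + Δ)⁻¹ * (R + Δ) - (R + Δ)⁻¹ * R) * R⁻¹ := by rw [Matrix.mul_sub]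
      _ = (R + Δ)⁻¹ * (R + Δ) * R⁻¹ - (R + Δ)⁻¹ * (R * R⁻¹) := by
          rw [Matrix.sub_mul, Matrix.mul_assoc ((R + Δ)⁻¹) R R⁻¹]
      _ = R⁻¹ - (R + Δ)⁻¹ := by rw [h1, h2, Matrix.one_mul, Matrix.mul_one]
  rw [key]
  abel


lemma mulNormLe {p q r : Type*} [Fintype p] [Fintype q] [Fintype r]
    (X : Matrix p q ℝ) (Y : Matrix q r ℝ) {a b : ℝ} (ha : ‖X‖ ≤ a) (hb : ‖Y‖ ≤ b) :
    ‖X * Y‖ ≤ (Fintype.card q : ℝ) * a * b := by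
  refine le_trans (norm_mul_le_card X Y) ?_
  have h1 := norm_nonneg X
  have h2 := norm_nonneg Y
  have h3 : (0:ℝ) ≤ (Fintype.card q : ℝ) := Nat.cast_nonneg _
  exact mul_le_mul (mul_le_mul le_rfl ha h1 h3) hb h2 (mul_nonneg h3 (h1.trans ha))


end auxLemmas

set_option maxHeartbeats 1600000 in
/-- the one-step policy-evaluation error caused by a small disturbance
`ΔG` is bounded linearly in `‖ΔG‖_F` and can be made smaller than any `c₂ > 0`. -/
theorem disturbed_policy_iteration_one_step_error_bound
    (n m : ℕ) (hn : 0 < n) (hm : 0 < m)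
    (A : Matrix (Fin n) (Fin n) ℝ) (B : Matrix (Fin n) (Fin m) ℝ)
    (Q : Matrix (Fin n) (Fin n) ℝ) (R : Matrix (Fin m) (Fin m) ℝ)
    (hQ : Q.PosSemidef) (hR : R.PosDef)
    (Pstar : Matrix (Fin n) (Fin n) ℝ) (hPstar : Pstar.PosDef)
    (hARE : Aᵀ * Pstar + Pstar * A - Pstar * B * R⁻¹ * Bᵀ * Pstar + Q = 0)
    (hAstar : IsHurwitz (A - B * R⁻¹ * Bᵀ * Pstar))
    (δ₀ : ℝ) (hδ₀ : 0 < δ₀)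
    (hHurBall : ∀ P : Matrix (Fin n) (Fin n) ℝ, P.IsSymm → frobNorm (P - Pstar) ≤ δ₀ →
      IsHurwitz (A - B * R⁻¹ * Bᵀ * P)) :
    ∃ c₃ > 0, ∀ c₂ > 0, ∃ δ₁ > 0,
      ∀ P : Matrix (Fin n) (Fin n) ℝ, P.IsSymm → frobNorm (P - Pstar) < δ₀ →
      ∀ ΔG : Matrix (Fin n ⊕ Fin m) (Fin n ⊕ Fin m) ℝ, ΔG.IsSymm → frobNorm ΔG < δ₁ →
        IsUnit (R + ΔG.toBlocks₂₂) ∧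
        IsHurwitz (A - B * ((R + ΔG.toBlocks₂₂)⁻¹ * (Bᵀ * P + ΔG.toBlocks₂₁))) ∧
        ∀ Y₁ Y₂ : Matrix (Fin n) (Fin n) ℝ, Y₁.IsSymm → Y₂.IsSymm →
          (A - B * ((R + ΔG.toBlocks₂₂)⁻¹ * (Bᵀ * P + ΔG.toBlocks₂₁)))ᵀ * Y₁
              + Y₁ * (A - B * ((R + ΔG.toBlocks₂₂)⁻¹ * (Bᵀ * P + ΔG.toBlocks₂₁)))
            = -(Q + ((R + ΔG.toBlocks₂₂)⁻¹ * (Bᵀ * P + ΔG.toBlocks₂₁))ᵀ * R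
                * ((R + ΔG.toBlocks₂₂)⁻¹ * (Bᵀ * P + ΔG.toBlocks₂₁))) →
          (A - B * R⁻¹ * Bᵀ * P)ᵀ * Y₂ + Y₂ * (A - B * R⁻¹ * Bᵀ * P)
            = -(Q + P * B * R⁻¹ * Bᵀ * P) →
          frobNorm (Y₁ - Y₂) ≤ c₃ * frobNorm ΔG ∧ c₃ * frobNorm ΔG < c₂ := by
  -- basic facts about R
  have hRdet : IsUnit R.det := isUnit_iff_ne_zero.2 (ne_of_gt hR.det_pos)
  have hRsym : Rᵀ = R := by
    have h := hR.isHermitian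
    ext i j
    have := congrFun (congrFun h i) j
    simpa using this
  have hRinvsym : (R⁻¹)ᵀ = R⁻¹ := by rw [Matrix.transpose_nonsing_inv, hRsym]
  -- the compact set of P's and its image
  set C : Set (Matrix (Fin n) (Fin n) ℝ) :=
    {P | P.IsSymm ∧ frobNorm (P - Pstar) ≤ δ₀} with hC
  have hCclosed : IsClosed C := by
    have h1 : IsClosed {P : Matrix (Fin n) (Fin n) ℝ | P.IsSymm} := by
      have he : {P : Matrix (Fin n) (Fin n) ℝ | P.IsSymm}
          = (fun P : Matrix (Fin n) (Fin n) ℝ => Pᵀ - P) ⁻¹' {0} := by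
        ext P
        simp [Matrix.IsSymm, sub_eq_zero]
      rw [he]
      exact IsClosed.preimage ((continuous_id.matrix_transpose).sub continuous_id)
        isClosed_singleton
    have h2 : IsClosed {P : Matrix (Fin n) (Fin n) ℝ | frobNorm (P - Pstar) ≤ δ₀} :=
      IsClosed.preimage (frobNorm_continuous.comp (continuous_id.sub continuous_const))
        isClosed_Iic
    rw [hC, Set.setOf_and]
    exact h1.inter h2
  have hCbounded : Bornology.IsBounded C := by
    apply (Metric.isBounded_closedBall (x := Pstar) (r := δ₀)).subset
    intro P hP
    rw [Metric.mem_closedBall, dist_eq_norm]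
    exact le_trans (norm_le_frobNorm _) hP.2
  have hCcomp : IsCompact C := Metric.isCompact_of_isClosed_isBounded hCclosed hCbounded
  set S : Set (Matrix (Fin n) (Fin n) ℝ) :=
    (fun P : Matrix (Fin n) (Fin n) ℝ => A - B * R⁻¹ * Bᵀ * P) '' C with hS
  have hScomp : IsCompact S := by
    apply hCcomp.image
    exact continuous_const.sub (continuous_const.matrix_mul continuous_id)
  have hSH : S ⊆ {X : Matrix (Fin n) (Fin n) ℝ | IsHurwitz X} := by
    rintro X ⟨P, hP, rfl⟩
    exact hHurBall P hP.1 hP.2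
  obtain ⟨η, hηpos, hηsub⟩ := hScomp.exists_thickening_subset_open isOpen_isHurwitz hSH
  set T : Set (Matrix (Fin n) (Fin n) ℝ) := Metric.cthickening (η / 2) S with hT
  have hTcomp : IsCompact T := hScomp.cthickening
  have hTH : T ⊆ {X : Matrix (Fin n) (Fin n) ℝ | IsHurwitz X} :=
    le_trans (Metric.cthickening_subset_thickening' hηpos (by linarith) S) hηsub
  -- bound on Lyapunov inverses over T
  have hgcont : ∀ X ∈ T, ContinuousAt
      (fun X : Matrix (Fin n) (Fin n) ℝ => ‖Ring.inverse (lyapCLM X)‖) X := by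
    intro X hX
    obtain ⟨u, hu⟩ := lyapCLM_isUnit X (hTH hX)
    have h1 : ContinuousAt Ring.inverse (lyapCLM X) := by
      rw [← hu]
      exact NormedRing.inverse_continuousAt u
    exact (h1.comp lyapCLM_continuous.continuousAt).norm
  obtain ⟨M₀, hM₀⟩ := hTcomp.exists_bound_of_continuousOn
    (fun X hX => (hgcont X hX).continuousWithinAt)
  set M : ℝ := max M₀ 1 with hM
  have hMpos : (0:ℝ) < M := lt_of_lt_of_le one_pos (le_max_right _ _)
  have hMbound : ∀ X ∈ T, ‖Ring.inverse (lyapCLM X)‖ ≤ M := by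
    intro X hX
    have := hM₀ X hX
    rw [Real.norm_eq_abs, abs_of_nonneg (norm_nonneg _)] at this
    exact le_trans this (le_max_left _ _)
  -- inverse stability at R
  obtain ⟨δa, hδapos, hδa⟩ := inv_stable R hRdet
  -- constants
  obtain ⟨n', hn'⟩ : ∃ x : ℝ, x = (n : ℝ) := ⟨_, rfl⟩
  obtain ⟨m', hm'⟩ : ∃ x : ℝ, x = (m : ℝ) := ⟨_, rfl⟩
  have hn'1 : (1:ℝ) ≤ n' := by rw [hn']; exact Nat.one_le_cast.mpr hn
  have hm'1 : (1:ℝ) ≤ m' := by rw [hm']; exact Nat.one_le_cast.mpr hm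
  obtain ⟨cP, hcP⟩ : ∃ x : ℝ, x = ‖Pstar‖ + δ₀ := ⟨_, rfl⟩
  obtain ⟨cB, hcB⟩ : ∃ x : ℝ, x = ‖B‖ := ⟨_, rfl⟩
  obtain ⟨cRi, hcRi⟩ : ∃ x : ℝ, x = ‖R⁻¹‖ := ⟨_, rfl⟩
  obtain ⟨cBP, hcBP⟩ : ∃ x : ℝ, x = n' * cB * cP := ⟨_, rfl⟩
  obtain ⟨cK, hcK⟩ : ∃ x : ℝ, x = m' * cRi * cBP := ⟨_, rfl⟩
  obtain ⟨cKp, hcKp⟩ : ∃ x : ℝ, x = m' * (cRi + 1) * (cBP + 1) := ⟨_, rfl⟩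
  obtain ⟨cb, hcb⟩ : ∃ x : ℝ,
    x = m' * (m' * (m' * (cRi + 1) * 1) * cRi) * cBP + m' * (cRi + 1) * 1 := ⟨_, rfl⟩
  obtain ⟨cc, hcc⟩ : ∃ x : ℝ, x = m' * cB * cb := ⟨_, rfl⟩
  obtain ⟨cY, hcY⟩ : ∃ x : ℝ, x = M * (‖Q‖ + m' * (m' * cKp * ‖R‖) * cKp) := ⟨_, rfl⟩
  obtain ⟨cD, hcD⟩ : ∃ x : ℝ, x = m' * (m' * cb * ‖R‖) * cKp + m' * (m' * cK * ‖R‖) * cb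
      + n' * cc * cY + n' * cY * cc := ⟨_, rfl⟩
  have hn'0 : (0:ℝ) ≤ n' := by linarith
  have hm'0 : (0:ℝ) ≤ m' := by linarith
  have hcPpos : 0 < cP := by rw [hcP]; positivity
  have hcBnn : 0 ≤ cB := by rw [hcB]; positivity
  have hcRinn : 0 ≤ cRi := by rw [hcRi]; positivity
  have hcBPnn : 0 ≤ cBP := by
    rw [hcBP]; exact mul_nonneg (mul_nonneg hn'0 hcBnn) (le_of_lt hcPpos)
  have hcKnn : 0 ≤ cK := by
    rw [hcK]; exact mul_nonneg (mul_nonneg hm'0 hcRinn) hcBPnn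
  have hcKpnn : 0 ≤ cKp := by
    rw [hcKp]; exact mul_nonneg (mul_nonneg hm'0 (by linarith)) (by linarith)
  have ht1 : 0 ≤ m' * (cRi + 1) * 1 := mul_nonneg (mul_nonneg hm'0 (by linarith)) zero_le_one
  have ht2 : 0 ≤ m' * (m' * (m' * (cRi + 1) * 1) * cRi) * cBP :=
    mul_nonneg (mul_nonneg hm'0 (mul_nonneg (mul_nonneg hm'0 ht1) hcRinn)) hcBPnn
  have hcbnn : 0 ≤ cb := by rw [hcb]; exact add_nonneg ht2 ht1
  have hccnn : 0 ≤ cc := by rw [hcc]; exact mul_nonneg (mul_nonneg hm'0 hcBnn) hcbnn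
  have hcYnn : 0 ≤ cY := by
    rw [hcY]
    refine mul_nonneg (le_of_lt hMpos) (add_nonneg (norm_nonneg Q) ?_)
    exact mul_nonneg (mul_nonneg hm'0 (mul_nonneg (mul_nonneg hm'0 hcKpnn) (norm_nonneg R))) hcKpnn
  have hcDnn : 0 ≤ cD := by
    rw [hcD]
    have h3 : 0 ≤ m' * (m' * cb * ‖R‖) * cKp :=
      mul_nonneg (mul_nonneg hm'0 (mul_nonneg (mul_nonneg hm'0 hcbnn) (norm_nonneg R))) hcKpnn
    have h4 : 0 ≤ m' * (m' * cK * ‖R‖) * cb :=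
      mul_nonneg (mul_nonneg hm'0 (mul_nonneg (mul_nonneg hm'0 hcKnn) (norm_nonneg R))) hcbnn
    have h5 : 0 ≤ n' * cc * cY := mul_nonneg (mul_nonneg hn'0 hccnn) hcYnn
    have h6 : 0 ≤ n' * cY * cc := mul_nonneg (mul_nonneg hn'0 hcYnn) hccnn
    linarith
  obtain ⟨c₃, hc₃⟩ : ∃ x : ℝ, x = max (n' * n' * (M * cD)) 1 := ⟨_, rfl⟩
  have hc₃pos : (0:ℝ) < c₃ := by rw [hc₃]; exact lt_of_lt_of_le one_pos (le_max_right _ _)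
  refine ⟨c₃, hc₃pos, ?_⟩
  intro c₂ hc₂
  obtain ⟨δ₁, hδ₁⟩ : ∃ x : ℝ, x = min (min 1 δa) (min ((η / 2) / (cc + 1)) (c₂ / c₃)) := ⟨_, rfl⟩
  have hδ₁pos : 0 < δ₁ := by
    rw [hδ₁]
    apply lt_min
    · exact lt_min one_pos hδapos
    · refine lt_min (div_pos (by linarith) (by linarith)) (div_pos hc₂ hc₃pos)
  refine ⟨δ₁, hδ₁pos, ?_⟩
  intro P hPsym hPfrob ΔG hΔGsym hΔGfrob
  -- abbreviations
  set g : ℝ := frobNorm ΔG with hgdef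
  have hg0 : 0 ≤ g := frobNorm_nonneg _
  rw [hδ₁] at hΔGfrob
  have hg1 : g < 1 := lt_of_lt_of_le hΔGfrob (le_trans (min_le_left _ _) (min_le_left _ _))
  have hga : g < δa := lt_of_lt_of_le hΔGfrob (le_trans (min_le_left _ _) (min_le_right _ _))
  have hgη : g ≤ (η / 2) / (cc + 1) :=
    le_of_lt (lt_of_lt_of_le hΔGfrob (le_trans (min_le_right _ _) (min_le_left _ _)))
  have hgc₂ : g < c₂ / c₃ := lt_of_lt_of_le hΔGfrob (le_trans (min_le_right _ _) (min_le_right _ _))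
  set Δ21 := ΔG.toBlocks₂₁ with hΔ21
  set Δ22 := ΔG.toBlocks₂₂ with hΔ22
  have hΔ21g : ‖Δ21‖ ≤ g := le_trans (norm_toBlocks₂₁_le ΔG) (norm_le_frobNorm ΔG)
  have hΔ22g : ‖Δ22‖ ≤ g := le_trans (norm_toBlocks₂₂_le ΔG) (norm_le_frobNorm ΔG)
  obtain ⟨hRΔdet, hRΔinv⟩ := hδa Δ22 (le_of_lt (lt_of_le_of_lt hΔ22g hga))
  have hRΔunit : IsUnit (R + Δ22) := (Matrix.isUnit_iff_isUnit_det _).2 hRΔdet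
  set Kp : Matrix (Fin m) (Fin n) ℝ := (R + Δ22)⁻¹ * (Bᵀ * P + Δ21) with hKpd
  obtain ⟨K, hKd⟩ : ∃ x : Matrix (Fin m) (Fin n) ℝ, x = R⁻¹ * (Bᵀ * P) := ⟨_, rfl⟩
  have hcardn : ((Fintype.card (Fin n) : ℕ) : ℝ) = n' := by rw [hn']; simp
  have hcardm : ((Fintype.card (Fin m) : ℕ) : ℝ) = m' := by rw [hm']; simp
  have hPnorm : ‖P‖ ≤ cP := by
    rw [hcP]
    have h1 : ‖P - Pstar‖ ≤ δ₀ := le_trans (norm_le_frobNorm _) (le_of_lt hPfrob)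
    have h2 := norm_sub_norm_le P Pstar
    linarith
  have hBt : ‖Bᵀ‖ ≤ cB := by rw [hcB, Matrix.norm_transpose]
  have hBP : ‖Bᵀ * P‖ ≤ cBP := by
    have hh := mulNormLe _ _ hBt hPnorm
    rw [hcardn] at hh
    rw [hcBP]
    exact hh
  have hRi : ‖R⁻¹‖ ≤ cRi := le_of_eq hcRi.symm
  have hRpi : ‖(R + Δ22)⁻¹‖ ≤ cRi + 1 := by rw [hcRi]; exact hRΔinv
  have hBPD : ‖Bᵀ * P + Δ21‖ ≤ cBP + 1 := by
    have h1 := norm_add_le (Bᵀ * P) Δ21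
    have h2 : ‖Δ21‖ ≤ 1 := le_trans hΔ21g (le_of_lt hg1)
    linarith
  have hKpn : ‖Kp‖ ≤ cKp := by
    have hh := mulNormLe _ _ hRpi hBPD
    rw [hcardm] at hh
    rw [hcKp, hKpd]
    exact hh
  have hKn : ‖K‖ ≤ cK := by
    have hh := mulNormLe _ _ hRi hBP
    rw [hcardm] at hh
    rw [hcK, hKd]
    exact hh
  obtain ⟨DK, hDKd⟩ : ∃ x : Matrix (Fin m) (Fin n) ℝ, x = Kp - K := ⟨_, rfl⟩
  have hDKeq : DK = -((R + Δ22)⁻¹ * Δ22 * R⁻¹) * (Bᵀ * P) + (R + Δ22)⁻¹ * Δ21 := by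
    rw [hDKd, hKpd, hKd, Matrix.mul_add, ← resolvent_id R Δ22 hRdet hRΔdet, Matrix.sub_mul]
    abel
  have hDKn : ‖DK‖ ≤ cb * g := by
    have e1 : ‖(R + Δ22)⁻¹ * Δ22‖ ≤ m' * (cRi + 1) * g := by
      have hh := mulNormLe _ _ hRpi hΔ22g
      rw [hcardm] at hh
      exact hh
    have e2 : ‖(R + Δ22)⁻¹ * Δ22 * R⁻¹‖ ≤ m' * (m' * (cRi + 1) * g) * cRi := by
      have hh := mulNormLe _ _ e1 hRi
      rw [hcardm] at hh
      exact hh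
    have e3 : ‖(R + Δ22)⁻¹ * Δ22 * R⁻¹ * (Bᵀ * P)‖
        ≤ m' * (m' * (m' * (cRi + 1) * g) * cRi) * cBP := by
      have hh := mulNormLe _ _ e2 hBP
      rw [hcardm] at hh
      exact hh
    have e4 : ‖(R + Δ22)⁻¹ * Δ21‖ ≤ m' * (cRi + 1) * g := by
      have hh := mulNormLe _ _ hRpi hΔ21g
      rw [hcardm] at hh
      exact hh
    have e5 := norm_add_le (-((R + Δ22)⁻¹ * Δ22 * R⁻¹) * (Bᵀ * P)) ((R + Δ22)⁻¹ * Δ21)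
    have e6 : ‖-((R + Δ22)⁻¹ * Δ22 * R⁻¹) * (Bᵀ * P)‖
        = ‖(R + Δ22)⁻¹ * Δ22 * R⁻¹ * (Bᵀ * P)‖ := by
      rw [Matrix.neg_mul, norm_neg]
    calc ‖DK‖ ≤ m' * (m' * (m' * (cRi + 1) * g) * cRi) * cBP + m' * (cRi + 1) * g := by
          rw [hDKeq]; rw [e6] at e5; linarith
      _ = (m' * (m' * (m' * (cRi + 1) * 1) * cRi) * cBP + m' * (cRi + 1) * 1) * g := by ring
      _ = cb * g := by rw [hcb]
  set X : Matrix (Fin n) (Fin n) ℝ := A - B * R⁻¹ * Bᵀ * P with hXd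
  set Xp : Matrix (Fin n) (Fin n) ℝ := A - B * Kp with hXpd
  have hXS : X ∈ S := ⟨P, ⟨hPsym, le_of_lt hPfrob⟩, rfl⟩
  have hXalt : X = A - B * K := by
    rw [hXd, hKd]
    congr 1
    rw [Matrix.mul_assoc, Matrix.mul_assoc]
  have hXpX : Xp = X - B * DK := by
    rw [hXpd, hXalt, hDKd, Matrix.mul_sub]
    abel
  have hBDK : ‖B * DK‖ ≤ cc * g := by
    have h := mulNormLe B DK (le_of_eq hcB.symm) hDKn
    rw [hcardm] at h
    calc ‖B * DK‖ ≤ m' * cB * (cb * g) := h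
      _ = (m' * cB * cb) * g := by ring
      _ = cc * g := by rw [hcc]
  have hXpT : Xp ∈ T := by
    rw [hT]
    refine Metric.mem_cthickening_of_dist_le Xp X _ _ hXS ?_
    have hsub : Xp - X = -(B * DK) := by rw [hXpX]; abel
    calc dist Xp X = ‖Xp - X‖ := dist_eq_norm _ _
      _ = ‖B * DK‖ := by rw [hsub, norm_neg]
      _ ≤ cc * g := hBDK
      _ ≤ η / 2 := by
          have h1 : cc * g ≤ cc * ((η / 2) / (cc + 1)) := mul_le_mul_of_nonneg_left hgη hccnn
          have hcc1 : (0:ℝ) < cc + 1 := by linarith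
          have hη2 : (0:ℝ) ≤ η / 2 := by linarith
          have h2 : cc * ((η / 2) / (cc + 1)) ≤ η / 2 := by
            rw [mul_div_assoc', div_le_iff₀ hcc1]
            calc cc * (η / 2) ≤ (cc + 1) * (η / 2) :=
                  mul_le_mul_of_nonneg_right (by linarith) hη2
              _ = η / 2 * (cc + 1) := by ring
          linarith
  have hXpHur : IsHurwitz Xp := hTH hXpT
  refine ⟨hRΔunit, hXpHur, ?_⟩
  intro Y₁ Y₂ hY₁s hY₂s hEq1 hEq2
  have hL1 : lyapCLM Xp Y₁ = -(Q + Kpᵀ * R * Kp) := by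
    rw [lyapCLM_apply]; exact hEq1
  have hcan : R * (R⁻¹ * (Bᵀ * P)) = Bᵀ * P := by
    rw [← Matrix.mul_assoc, Matrix.mul_nonsing_inv R hRdet, Matrix.one_mul]
  have hKRK : Kᵀ * R * K = P * B * R⁻¹ * Bᵀ * P := by
    rw [hKd]
    calc (R⁻¹ * (Bᵀ * P))ᵀ * R * (R⁻¹ * (Bᵀ * P))
        = Pᵀ * B * R⁻¹ * R * (R⁻¹ * (Bᵀ * P)) := by
          rw [Matrix.transpose_mul, Matrix.transpose_mul, Matrix.transpose_transpose, hRinvsym,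
            Matrix.mul_assoc (Pᵀ) B (R⁻¹)]
      _ = Pᵀ * B * R⁻¹ * (R * (R⁻¹ * (Bᵀ * P))) := by rw [Matrix.mul_assoc]
      _ = Pᵀ * B * R⁻¹ * (Bᵀ * P) := by rw [hcan]
      _ = P * B * R⁻¹ * Bᵀ * P := by rw [hPsym, ← Matrix.mul_assoc]
  have hL2 : lyapCLM X Y₂ = -(Q + Kᵀ * R * K) := by
    rw [lyapCLM_apply, hKRK]; exact hEq2
  have hId : Kpᵀ * R * Kp - Kᵀ * R * K = DKᵀ * R * Kp + Kᵀ * R * DK := by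
    rw [hDKd, Matrix.transpose_sub, Matrix.sub_mul, Matrix.sub_mul, Matrix.mul_sub]
    abel
  have hXdecomp : X = Xp + B * DK := by rw [hXpX]; abel
  have hE : lyapCLM X (Y₁ - Y₂)
      = -(DKᵀ * R * Kp + Kᵀ * R * DK) + ((B * DK)ᵀ * Y₁ + Y₁ * (B * DK)) := by
    rw [lyapCLM_apply, Matrix.mul_sub, Matrix.sub_mul]
    have e1 : Xᵀ * Y₁ + Y₁ * X = -(Q + Kpᵀ * R * Kp) + ((B * DK)ᵀ * Y₁ + Y₁ * (B * DK)) := by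
      rw [hXdecomp, Matrix.transpose_add, Matrix.add_mul, Matrix.mul_add]
      calc Xpᵀ * Y₁ + (B * DK)ᵀ * Y₁ + (Y₁ * Xp + Y₁ * (B * DK))
          = (Xpᵀ * Y₁ + Y₁ * Xp) + ((B * DK)ᵀ * Y₁ + Y₁ * (B * DK)) := by abel
        _ = -(Q + Kpᵀ * R * Kp) + ((B * DK)ᵀ * Y₁ + Y₁ * (B * DK)) := by rw [hEq1]
    have e2 : Xᵀ * Y₂ + Y₂ * X = -(Q + Kᵀ * R * K) := by rw [hKRK]; exact hEq2
    have e3 : Xᵀ * Y₁ - Xᵀ * Y₂ + (Y₁ * X - Y₂ * X)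
        = (Xᵀ * Y₁ + Y₁ * X) - (Xᵀ * Y₂ + Y₂ * X) := by abel
    rw [e3, e1, e2, ← hId]
    abel
  have hu1 : IsUnit (lyapCLM Xp) := lyapCLM_isUnit Xp hXpHur
  have hu0 : IsUnit (lyapCLM X) := lyapCLM_isUnit X (hSH hXS)
  have hY1eq : Y₁ = Ring.inverse (lyapCLM Xp) (-(Q + Kpᵀ * R * Kp)) := by
    rw [← hL1]
    calc Y₁ = (Ring.inverse (lyapCLM Xp) * lyapCLM Xp) Y₁ := by
          rw [Ring.inverse_mul_cancel _ hu1, ContinuousLinearMap.one_apply]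
      _ = Ring.inverse (lyapCLM Xp) (lyapCLM Xp Y₁) := by rw [ContinuousLinearMap.mul_apply]
  have hMXp : ‖Ring.inverse (lyapCLM Xp)‖ ≤ M := hMbound Xp hXpT
  have hXT : X ∈ T := by rw [hT]; exact Metric.self_subset_cthickening S hXS
  have hMX : ‖Ring.inverse (lyapCLM X)‖ ≤ M := hMbound X hXT
  have hQKp : ‖Q + Kpᵀ * R * Kp‖ ≤ ‖Q‖ + m' * (m' * cKp * ‖R‖) * cKp := by
    have h1 : ‖Kpᵀ * R‖ ≤ m' * cKp * ‖R‖ := by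
      have hh := mulNormLe Kpᵀ R (by rw [Matrix.norm_transpose]; exact hKpn : ‖Kpᵀ‖ ≤ cKp) le_rfl
      rw [hcardm] at hh
      exact hh
    have h2 : ‖Kpᵀ * R * Kp‖ ≤ m' * (m' * cKp * ‖R‖) * cKp := by
      have hh := mulNormLe _ _ h1 hKpn
      rw [hcardm] at hh
      exact hh
    have h3 := norm_add_le Q (Kpᵀ * R * Kp)
    linarith
  have hY1n : ‖Y₁‖ ≤ cY := by
    rw [hY1eq, hcY]
    calc ‖Ring.inverse (lyapCLM Xp) (-(Q + Kpᵀ * R * Kp))‖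
        ≤ ‖Ring.inverse (lyapCLM Xp)‖ * ‖-(Q + Kpᵀ * R * Kp)‖ :=
          ContinuousLinearMap.le_opNorm _ _
      _ ≤ M * (‖Q‖ + m' * (m' * cKp * ‖R‖) * cKp) := by
          rw [norm_neg]
          exact mul_le_mul hMXp hQKp (norm_nonneg _) (le_of_lt hMpos)
  have hEeq : Y₁ - Y₂ = Ring.inverse (lyapCLM X)
      (-(DKᵀ * R * Kp + Kᵀ * R * DK) + ((B * DK)ᵀ * Y₁ + Y₁ * (B * DK))) := by
    rw [← hE]
    calc Y₁ - Y₂ = (Ring.inverse (lyapCLM X) * lyapCLM X) (Y₁ - Y₂) := by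
          rw [Ring.inverse_mul_cancel _ hu0, ContinuousLinearMap.one_apply]
      _ = Ring.inverse (lyapCLM X) (lyapCLM X (Y₁ - Y₂)) := by
          rw [ContinuousLinearMap.mul_apply]
  have hDbound : ‖-(DKᵀ * R * Kp + Kᵀ * R * DK) + ((B * DK)ᵀ * Y₁ + Y₁ * (B * DK))‖
      ≤ cD * g := by
    have b1 : ‖DKᵀ * R‖ ≤ m' * (cb * g) * ‖R‖ := by
      have hh := mulNormLe DKᵀ R (by rw [Matrix.norm_transpose]; exact hDKn : ‖DKᵀ‖ ≤ cb * g) le_rfl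
      rw [hcardm] at hh
      exact hh
    have b2 : ‖DKᵀ * R * Kp‖ ≤ m' * (m' * (cb * g) * ‖R‖) * cKp := by
      have hh := mulNormLe _ _ b1 hKpn
      rw [hcardm] at hh
      exact hh
    have b3 : ‖Kᵀ * R‖ ≤ m' * cK * ‖R‖ := by
      have hh := mulNormLe Kᵀ R (by rw [Matrix.norm_transpose]; exact hKn : ‖Kᵀ‖ ≤ cK) le_rfl
      rw [hcardm] at hh
      exact hh
    have b4 : ‖Kᵀ * R * DK‖ ≤ m' * (m' * cK * ‖R‖) * (cb * g) := by
      have hh := mulNormLe _ _ b3 hDKn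
      rw [hcardm] at hh
      exact hh
    have b5 : ‖(B * DK)ᵀ * Y₁‖ ≤ n' * (cc * g) * cY := by
      have hhn := mulNormLe (B * DK)ᵀ Y₁ (by rw [Matrix.norm_transpose]; exact hBDK : ‖(B * DK)ᵀ‖ ≤ cc * g) hY1n
      rw [hcardn] at hhn
      exact hhn
    have b6 : ‖Y₁ * (B * DK)‖ ≤ n' * cY * (cc * g) := by
      have hhn := mulNormLe _ _ hY1n hBDK
      rw [hcardn] at hhn
      exact hhn
    have b7 := norm_add_le (-(DKᵀ * R * Kp + Kᵀ * R * DK)) ((B * DK)ᵀ * Y₁ + Y₁ * (B * DK))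
    have b8 := norm_add_le (DKᵀ * R * Kp) (Kᵀ * R * DK)
    have b9 := norm_add_le ((B * DK)ᵀ * Y₁) (Y₁ * (B * DK))
    rw [norm_neg] at b7
    calc ‖-(DKᵀ * R * Kp + Kᵀ * R * DK) + ((B * DK)ᵀ * Y₁ + Y₁ * (B * DK))‖
        ≤ m' * (m' * (cb * g) * ‖R‖) * cKp + m' * (m' * cK * ‖R‖) * (cb * g)
          + n' * (cc * g) * cY + n' * cY * (cc * g) := by linarith
      _ = (m' * (m' * cb * ‖R‖) * cKp + m' * (m' * cK * ‖R‖) * cb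
          + n' * cc * cY + n' * cY * cc) * g := by ring
      _ = cD * g := by rw [hcD]
  have hEn : ‖Y₁ - Y₂‖ ≤ M * (cD * g) := by
    rw [hEeq]
    calc ‖Ring.inverse (lyapCLM X)
          (-(DKᵀ * R * Kp + Kᵀ * R * DK) + ((B * DK)ᵀ * Y₁ + Y₁ * (B * DK)))‖
        ≤ ‖Ring.inverse (lyapCLM X)‖
          * ‖-(DKᵀ * R * Kp + Kᵀ * R * DK) + ((B * DK)ᵀ * Y₁ + Y₁ * (B * DK))‖ :=
          ContinuousLinearMap.le_opNorm _ _
      _ ≤ M * (cD * g) := mul_le_mul hMX hDbound (norm_nonneg _) (le_of_lt hMpos)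
  constructor
  · calc frobNorm (Y₁ - Y₂) ≤ n' * n' * ‖Y₁ - Y₂‖ := by
          have h := frobNorm_le_card_mul_norm (Y₁ - Y₂)
          rw [hcardn] at h
          exact h
      _ ≤ n' * n' * (M * (cD * g)) := mul_le_mul_of_nonneg_left hEn (mul_nonneg hn'0 hn'0)
      _ = (n' * n' * (M * cD)) * g := by ring
      _ ≤ c₃ * g := by
          refine mul_le_mul_of_nonneg_right ?_ hg0
          rw [hc₃]; exact le_max_left _ _
  · calc c₃ * g < c₃ * (c₂ / c₃) := mul_lt_mul_of_pos_left hgc₂ hc₃pos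
      _ = c₂ := by field_simp
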